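/- Let K be a connected subset of a finite graph with uniform edge length δ and restricted path metric d_K, and let u : K ∪ ∂K → ℝ satisfy Lip(u, K) = Lip(u, ∂K), where Lip(u,K) = max_{x≠y ∈ K∪∂K} |u(x)−u(y)|/d_K(x,y) and Lip(u,∂K) = max_{x≠y ∈ ∂K} |u(x)−u(y)|/d_K(x,y). Suppose x, y ∈ ∂K realize Lip(u,∂K) = |u(x)−u(y)|/d_K(x,y), and γ = {x = x₀, x₁, …, x_N = y} is a minimal path for d_K joining x to y. Then u is linear along γ: u(x_i) = (d_K(x_i,x)·u(y) + d_K(x_i,y)·u(x))/d_K(x,y) for all i. -/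

import Mathlib

open Filter Topology
open scoped Classical

noncomputable section

variable {V : Type*}

/-- A path from `x` to `y` whose interior vertices `l` all lie in `K`. -/
def pathIn (adj : V → V → Prop) (K : Set V) (x y : V) (l : List V) : Prop :=
  List.Chain adj x (l ++ [y]) ∧ ∀ z ∈ l, z ∈ K

/-- The restricted path metric `d_K` (edge length `δ`), via paths with interior in `K`. -/
def dK (adj : V → V → Prop) (K : Set V) (δ : ℝ) (x y : V) : ℝ :=
  if x = y then 0
  else sInf {r : ℝ | ∃ l : List V, pathIn adj K x y l ∧ r = δ * (l.length + 1)}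

/-- The boundary of a vertex set `K`. -/
def bdry (adj : V → V → Prop) (K : Set V) : Set V :=
  {y | y ∉ K ∧ ∃ x ∈ K, adj x y}

/-- The graph infinity Laplacian. -/
def lapInf (adj : V → V → Prop) (u : V → ℝ) (x : V) : ℝ :=
  sSup ((fun y => u y - u x) '' {y | adj x y}) +
    sInf ((fun y => u y - u x) '' {y | adj x y})

/-- The local Lipschitz constant `F(u,x)` at a vertex `x`. -/
def locLip (adj : V → V → Prop) (δ : ℝ) (u : V → ℝ) (x : V) : ℝ :=
  sSup ((fun y => |u x - u y| / δ) '' {y | adj x y})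

/-- The Lipschitz constant of `u` over the set `A`, measured in the metric `d_K`. -/
def LipOn (adj : V → V → Prop) (K A : Set V) (δ : ℝ) (u : V → ℝ) : ℝ :=
  sSup {r : ℝ | ∃ x ∈ A, ∃ y ∈ A, x ≠ y ∧ r = |u x - u y| / dK adj K δ x y}

/-- `K` is connected: any two points of `K ∪ ∂K` are joined by a path through `K`. -/
def connectedIn (adj : V → V → Prop) (K : Set V) : Prop :=
  ∀ x ∈ K ∪ bdry adj K, ∀ y ∈ K ∪ bdry adj K, x ≠ y → ∃ l, pathIn adj K x y l

section aux
variable {adj : V → V → Prop} {K : Set V} {δ : ℝ}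

lemma pathIn_reverse (hsymm : ∀ x y, adj x y → adj y x) {x y : V} {l : List V}
    (h : pathIn adj K x y l) : pathIn adj K y x l.reverse := by
  obtain ⟨hc, hm⟩ := h
  refine ⟨?_, fun z hz => hm z (List.mem_reverse.mp hz)⟩
  have h1 : List.Chain' (flip adj) (x :: (l ++ [y])) :=
    List.IsChain.imp (fun a b h => hsymm a b h) hc
  have h2 : List.Chain' adj ((x :: (l ++ [y])).reverse) := List.isChain_reverse.mpr h1
  have h3 : (x :: (l ++ [y])).reverse = y :: (l.reverse ++ [x]) := by simp
  rw [h3] at h2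
  exact h2

lemma dK_symm (hsymm : ∀ x y, adj x y → adj y x) (x y : V) :
    dK adj K δ x y = dK adj K δ y x := by
  unfold dK
  rcases eq_or_ne x y with rfl | h
  · simp
  · rw [if_neg h, if_neg (Ne.symm h)]
    congr 1
    ext r
    constructor
    · rintro ⟨l, hp, rfl⟩
      exact ⟨l.reverse, pathIn_reverse hsymm hp, by simp⟩
    · rintro ⟨l, hp, rfl⟩
      exact ⟨l.reverse, pathIn_reverse hsymm hp, by simp⟩

lemma dK_le (hδ : 0 ≤ δ) {x z : V} {m : List V} (h : pathIn adj K x z m) :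
    dK adj K δ x z ≤ δ * (m.length + 1) := by
  rcases eq_or_ne x z with rfl | hne
  · rw [dK, if_pos rfl]
    exact mul_nonneg hδ (by positivity)
  · rw [dK, if_neg hne]
    exact csInf_le ⟨0, by rintro r ⟨l', _, rfl⟩; exact mul_nonneg hδ (by positivity)⟩
      ⟨m, h, rfl⟩

lemma le_dK {x z : V} (hne : x ≠ z) {c : ℝ}
    (h : ∀ m, pathIn adj K x z m → c ≤ δ * (m.length + 1))
    (hex : ∃ m, pathIn adj K x z m) : c ≤ dK adj K δ x z := by
  rw [dK, if_neg hne]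
  obtain ⟨m, hm⟩ := hex
  exact le_csInf ⟨_, ⟨m, hm, rfl⟩⟩ (by rintro r ⟨m', hm', rfl⟩; exact h m' hm')

lemma dK_pos (hδ : 0 < δ) {x z : V} (hne : x ≠ z) (hex : ∃ m, pathIn adj K x z m) :
    0 < dK adj K δ x z := by
  have : δ ≤ dK adj K δ x z := by
    refine le_dK hne (fun m _ => ?_) hex
    have : (0:ℝ) ≤ m.length := by positivity
    nlinarith
  linarith

lemma abs_le_LipOn [Fintype V] (hδ : 0 < δ) (hconn : connectedIn adj K) (u : V → ℝ)
    {a b : V} (ha : a ∈ K ∪ bdry adj K) (hb : b ∈ K ∪ bdry adj K) :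
    |u a - u b| ≤ LipOn adj K (K ∪ bdry adj K) δ u * dK adj K δ a b := by
  rcases eq_or_ne a b with rfl | hab
  · simp [dK]
  · have hd : 0 < dK adj K δ a b := dK_pos hδ hab (hconn a ha b hb hab)
    have hbdd : BddAbove {r : ℝ | ∃ x ∈ K ∪ bdry adj K, ∃ y ∈ K ∪ bdry adj K,
        x ≠ y ∧ r = |u x - u y| / dK adj K δ x y} := by
      apply Set.Finite.bddAbove
      apply Set.Finite.subset
        (Set.finite_range (fun p : V × V => |u p.1 - u p.2| / dK adj K δ p.1 p.2))
      rintro r ⟨x, _, y, _, _, rfl⟩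
      exact ⟨(x, y), rfl⟩
    have hmem : |u a - u b| / dK adj K δ a b ∈ {r : ℝ | ∃ x ∈ K ∪ bdry adj K,
        ∃ y ∈ K ∪ bdry adj K, x ≠ y ∧ r = |u x - u y| / dK adj K δ x y} :=
      ⟨a, ha, b, hb, hab, rfl⟩
    have hle := le_csSup hbdd hmem
    exact (div_le_iff₀ hd).mp hle

end aux

/-- Linearity along a minimal path realizing the maximal boundary slope. -/
theorem stmt4 [Fintype V] (adj : V → V → Prop) (hsymm : ∀ x y, adj x y → adj y x)
    (δ : ℝ) (hδ : 0 < δ) (K : Set V) (hconn : connectedIn adj K) (u : V → ℝ)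
    (hLip : LipOn adj K (K ∪ bdry adj K) δ u = LipOn adj K (bdry adj K) δ u)
    (x y : V) (hx : x ∈ bdry adj K) (hy : y ∈ bdry adj K) (hxy : x ≠ y)
    (hmax : LipOn adj K (bdry adj K) δ u = |u x - u y| / dK adj K δ x y)
    (l : List V) (hl : pathIn adj K x y l)
    (hmin : δ * (l.length + 1) = dK adj K δ x y) :
    ∀ z ∈ x :: (l ++ [y]),
      u z = (dK adj K δ z x * u y + dK adj K δ z y * u x) / dK adj K δ x y := by
  intro z hz
  have hDpos : 0 < dK adj K δ x y := dK_pos hδ hxy ⟨l, hl⟩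
  have hxU : x ∈ K ∪ bdry adj K := Or.inr hx
  have hyU : y ∈ K ∪ bdry adj K := Or.inr hy
  set L := LipOn adj K (bdry adj K) δ u with hLdef
  have hEq : |u x - u y| = L * dK adj K δ x y := by
    rw [hmax]; field_simp
  have hLipb : ∀ a ∈ K ∪ bdry adj K, ∀ b ∈ K ∪ bdry adj K,
      |u a - u b| ≤ L * dK adj K δ a b := by
    intro a ha b hb
    rw [← hLip]
    exact abs_le_LipOn hδ hconn u ha hb
  simp only [List.mem_cons, List.mem_append, List.mem_singleton, List.not_mem_nil, or_false] at hz
  rcases hz with rfl | hz | rfl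
  · -- z = x
    have h0 : dK adj K δ z z = 0 := by rw [dK, if_pos rfl]
    rw [h0]
    field_simp
    ring
  · -- z ∈ l
    obtain ⟨l₁, l₂, rfl⟩ := List.append_of_mem hz
    have hzK : z ∈ K := hl.2 z hz
    have hzx : z ≠ x := fun h => hx.1 (h ▸ hzK)
    have hzy : z ≠ y := fun h => hy.1 (h ▸ hzK)
    have hc : List.Chain adj x (l₁ ++ z :: (l₂ ++ [y])) := by
      have := hl.1
      simpa [List.append_assoc] using this
    obtain ⟨hc1, hc2⟩ := List.isChain_cons_split.mp hc
    have hp1 : pathIn adj K x z l₁ :=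
      ⟨hc1, fun w hw => hl.2 w (by simp [hw])⟩
    have hp2 : pathIn adj K z y l₂ :=
      ⟨hc2, fun w hw => hl.2 w (by simp [hw])⟩
    -- exact values of dK x z and dK z y
    have hDval : dK adj K δ x y = δ * (l₁.length + l₂.length + 2) := by
      rw [← hmin]; push_cast [List.length_append, List.length_cons]; ring
    have ha_eq : dK adj K δ x z = δ * (l₁.length + 1) := by
      refine le_antisymm (dK_le hδ.le hp1) ?_
      refine le_dK (Ne.symm hzx) (fun m hm => ?_) ⟨l₁, hp1⟩
      have hjoin : pathIn adj K x y (m ++ z :: l₂) := by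
        refine ⟨?_, ?_⟩
        · have : List.Chain adj x (m ++ z :: (l₂ ++ [y])) :=
            List.isChain_cons_split.mpr ⟨hm.1, hc2⟩
          simpa [List.append_assoc] using this
        · intro w hw
          simp only [List.mem_append, List.mem_cons] at hw
          rcases hw with hw | rfl | hw
          · exact hm.2 w hw
          · exact hzK
          · exact hp2.2 w hw
      have h1 := dK_le (K := K) hδ.le hjoin
      rw [hDval] at h1
      simp only [List.length_append, List.length_cons] at h1
      push_cast at h1 ⊢
      nlinarith
    have hb_eq : dK adj K δ z y = δ * (l₂.length + 1) := by
      refine le_antisymm (dK_le hδ.le hp2) ?_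
      refine le_dK hzy (fun m hm => ?_) ⟨l₂, hp2⟩
      have hjoin : pathIn adj K x y (l₁ ++ z :: m) := by
        refine ⟨?_, ?_⟩
        · have : List.Chain adj x (l₁ ++ z :: (m ++ [y])) :=
            List.isChain_cons_split.mpr ⟨hc1, hm.1⟩
          simpa [List.append_assoc] using this
        · intro w hw
          simp only [List.mem_append, List.mem_cons] at hw
          rcases hw with hw | rfl | hw
          · exact hp1.2 w hw
          · exact hzK
          · exact hm.2 w hw
      have h1 := dK_le (K := K) hδ.le hjoin
      rw [hDval] at h1
      simp only [List.length_append, List.length_cons] at h1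
      push_cast at h1 ⊢
      nlinarith
    have hzx_eq : dK adj K δ z x = dK adj K δ x z := dK_symm hsymm z x
    have hab : dK adj K δ x z + dK adj K δ z y = dK adj K δ x y := by
      rw [ha_eq, hb_eq, hDval]; ring
    have hzU : z ∈ K ∪ bdry adj K := Or.inl hzK
    have h1 := hLipb x hxU z hzU
    have h2 := hLipb z hzU y hyU
    set a := dK adj K δ x z
    set b := dK adj K δ z y
    set D := dK adj K δ x y
    rw [hzx_eq, eq_div_iff hDpos.ne']
    have hLab : L * a + L * b = L * D := by rw [← hab]; ring
    rcases le_total (u x) (u y) with hcase | hcase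
    · have e1 : u y - u x = L * D := by
        rw [← hEq, abs_sub_comm, abs_of_nonneg (by linarith)]
      have p1 : u z - u x ≤ L * a := by
        calc u z - u x ≤ |u z - u x| := le_abs_self _
        _ = |u x - u z| := abs_sub_comm _ _
        _ ≤ L * a := h1
      have q1 : u y - u z ≤ L * b := by
        calc u y - u z ≤ |u y - u z| := le_abs_self _
        _ = |u z - u y| := abs_sub_comm _ _
        _ ≤ L * b := h2
      have ep : u z - u x = L * a := by linarith
      linear_combination D * ep - a * e1 - u x * hab
    · have e1 : u x - u y = L * D := by
        rw [← hEq, abs_of_nonneg (by linarith)]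
      have p1 : u x - u z ≤ L * a := (le_abs_self _).trans h1
      have q1 : u z - u y ≤ L * b := by
        calc u z - u y ≤ |u z - u y| := le_abs_self _
        _ ≤ L * b := h2
      have ep : u x - u z = L * a := by linarith
      linear_combination -D * ep + a * e1 - u x * hab
  · -- z = y
    have h0 : dK adj K δ z z = 0 := by rw [dK, if_pos rfl]
    have hsy : dK adj K δ z x = dK adj K δ x z := dK_symm hsymm z x
    rw [h0, hsy]
    field_simp
    ring
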